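/- arXiv:1311.4734 — 2 statements merged into one kernel-verified Lean document; each statement's English description precedes it below -/
import Mathlib

section
/- For every strictly increasing sequence {a_i} of positive integers with a_n ≡ n (mod 2) for all n ≥ 1, and for every n > 1, the shift of the Morse sequence σ^{r_n}(m), where r_n = 3·2^{a_n} − Σ_{i=1}^{n−1} 2^{a_i}, begins with the block M_{a_1} M_{a_2} ... M_{a_n}. -/
open Filter

/-- Metric on Σ₂ = {0,1}^ℕ : d(u,v) = Σ_{i≥1} δ(u_i,v_i)/2^i (coordinates 0-indexed). -/
noncomputable def dist2 (u v : ℕ → Bool) : ℝ :=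
  ∑' i : ℕ, if u i = v i then 0 else (1/2)^(i+1)

/-- The shift map. -/
def shift (u : ℕ → Bool) : ℕ → Bool := fun n => u (n + 1)

/-- Binary complement of a word. -/
def wordCompl (B : List Bool) : List Bool := B.map (fun b => !b)

/-- Morse blocks: M_0 = 0, M_{i+1} = M_i followed by its complement. -/
def morseBlock : ℕ → List Bool
  | 0 => [false]
  | i + 1 => morseBlock i ++ wordCompl (morseBlock i)

/-- The Morse sequence, the limit of the Morse blocks. -/
def morse : ℕ → Bool := fun n => (morseBlock (n + 1)).getD n false

open Classical in
/-- Infinite concatenation of a sequence of (nonempty) blocks. -/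
noncomputable def concatSeq (B : ℕ → List Bool) (k : ℕ) : Bool :=
  if h : ∃ n, ∑ i ∈ Finset.range n, (B i).length ≤ k ∧
      k < ∑ i ∈ Finset.range (n + 1), (B i).length then
    (B h.choose).getD (k - ∑ i ∈ Finset.range h.choose, (B i).length) false
  else false

open Classical in
/-- Lower distributional function. -/
noncomputable def Phi (x y : ℕ → Bool) (δ : ℝ) : ℝ :=
  liminf (fun m : ℕ =>
    (((Finset.Ioo 0 m).filter (fun k => dist2 (shift^[k] x) (shift^[k] y) < δ)).card : ℝ) / m)
    atTop

open Classical in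
/-- Upper distributional function. -/
noncomputable def PhiStar (x y : ℕ → Bool) (ε : ℝ) : ℝ :=
  limsup (fun m : ℕ =>
    (((Finset.Ioo 0 m).filter (fun k => dist2 (shift^[k] x) (shift^[k] y) < ε)).card : ℝ) / m)
    atTop

/-- A Li-Yorke scrambled triple. -/
noncomputable def ScrTriple (x y z : ℕ → Bool) : Prop :=
  x ≠ y ∧ x ≠ z ∧ y ≠ z ∧
  liminf (fun k : ℕ => max (max (dist2 (shift^[k] x) (shift^[k] y))
      (dist2 (shift^[k] x) (shift^[k] z))) (dist2 (shift^[k] y) (shift^[k] z))) atTop = 0 ∧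
  0 < limsup (fun k : ℕ => min (min (dist2 (shift^[k] x) (shift^[k] y))
      (dist2 (shift^[k] x) (shift^[k] z))) (dist2 (shift^[k] y) (shift^[k] z))) atTop

/-- Concatenation of Morse blocks M_{a j}, complemented where `e j = true`. -/
noncomputable def blockPt (a : ℕ → ℕ) (e : ℕ → Bool) : ℕ → Bool :=
  concatSeq (fun j => if e j then wordCompl (morseBlock (a j)) else morseBlock (a j))

/-- A point occurring as in Theorem 2: odd-position blocks fixed, even-position blocks chosen by α. -/
noncomputable def xpt (a : ℕ → ℕ) (α : ℕ → Bool) : ℕ → Bool :=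
  blockPt a (fun j => if j % 2 = 0 then α (j / 2) else false)

/-- Cantor set predicate. -/
def IsCantorSet (C : Set (ℕ → Bool)) : Prop :=
  C.Nonempty ∧ IsCompact C ∧ Perfect C ∧ IsTotallyDisconnected C

/-- The Morse minimal set: orbit closure of the Morse sequence. -/
def morseMinimal : Set (ℕ → Bool) := closure {y | ∃ k : ℕ, y = shift^[k] morse}


private def mf (n : ℕ) : Bool :=
  if h : n = 0 then false else xor (decide (n % 2 = 1)) (mf (n / 2))
  decreasing_by exact Nat.div_lt_self (Nat.pos_of_ne_zero h) one_lt_two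

private lemma mf_zero : mf 0 = false := by rw [mf]; simp

private lemma mf_two_mul (n : ℕ) : mf (2 * n) = mf n := by
  rcases Nat.eq_zero_or_pos n with h | h
  · simp [h]
  · rw [mf]
    have : ¬ (2 * n = 0) := by omega
    simp [this, Nat.mul_div_cancel_left, Nat.mul_mod_right]

private lemma mf_two_mul_add_one (n : ℕ) : mf (2 * n + 1) = !(mf n) := by
  rw [mf]
  have h1 : (2 * n + 1) % 2 = 1 := by omega
  have h2 : (2 * n + 1) / 2 = n := by omega
  simp [h1, h2]

private lemma mf_one : mf 1 = true := by
  have := mf_two_mul_add_one 0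
  simpa [mf_zero] using this

private lemma mf_mul_pow_add (q : ℕ) : ∀ (i p : ℕ), p < 2 ^ i →
    mf (q * 2 ^ i + p) = xor (mf q) (mf p) := by
  intro i
  induction i generalizing q with
  | zero => intro p hp; interval_cases p <;> simp [mf_zero]
  | succ i ih =>
    intro p hp
    have h2 : q * 2 ^ (i + 1) = 2 * (q * 2 ^ i) := by ring
    rcases Nat.mod_two_eq_zero_or_one p with hb | hb
    · have hp' : p / 2 < 2 ^ i := by
        have : (2:ℕ) ^ (i+1) = 2 * 2 ^ i := by ring
        omega
      have harg : q * 2 ^ (i + 1) + p = 2 * (q * 2 ^ i + p / 2) := by omega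
      have hpe : p = 2 * (p / 2) := by omega
      rw [harg, mf_two_mul, ih q _ hp']
      conv_rhs => rw [hpe, mf_two_mul]
    · have hp' : p / 2 < 2 ^ i := by
        have : (2:ℕ) ^ (i+1) = 2 * 2 ^ i := by ring
        omega
      have harg : q * 2 ^ (i + 1) + p = 2 * (q * 2 ^ i + p / 2) + 1 := by omega
      have hpe : p = 2 * (p / 2) + 1 := by omega
      rw [harg, mf_two_mul_add_one, ih q _ hp']
      conv_rhs => rw [hpe, mf_two_mul_add_one]
      cases mf q <;> cases mf (p / 2) <;> rfl

private lemma morseBlock_length (i : ℕ) : (morseBlock i).length = 2 ^ i := by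
  induction i with
  | zero => rfl
  | succ i ih => simp [morseBlock, wordCompl, ih]; ring

private lemma morseBlock_getD : ∀ (i p : ℕ), p < 2 ^ i →
    (morseBlock i).getD p false = mf p := by
  intro i
  induction i with
  | zero =>
    intro p hp
    interval_cases p
    simp [morseBlock, mf_zero]
  | succ i ih =>
    intro p hp
    rw [morseBlock]
    by_cases hpi : p < 2 ^ i
    · rw [List.getD_append _ _ _ _ (by rw [morseBlock_length]; exact hpi), ih p hpi]
    · push_neg at hpi
      have hlen : (morseBlock i).length ≤ p := by rw [morseBlock_length]; exact hpi
      rw [List.getD_append_right _ _ _ _ hlen, morseBlock_length]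
      have hp' : p - 2 ^ i < 2 ^ i := by
        have : (2:ℕ) ^ (i+1) = 2 * 2 ^ i := by ring
        omega
      have hget : (wordCompl (morseBlock i)).getD (p - 2 ^ i) false
          = !((morseBlock i).getD (p - 2 ^ i) false) := by
        have hlt : p - 2 ^ i < (morseBlock i).length := by
          rw [morseBlock_length]; exact hp'
        have hlt2 : p - 2 ^ i < (wordCompl (morseBlock i)).length := by
          simpa [wordCompl] using hlt
        rw [List.getD_eq_getElem _ _ hlt2, List.getD_eq_getElem _ _ hlt]
        simp [wordCompl]
      rw [hget, ih _ hp']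
      rw [show mf p = mf (1 * 2 ^ i + (p - 2 ^ i)) by congr 1; omega]
      rw [mf_mul_pow_add 1 i _ hp', mf_one]
      cases mf (p - 2 ^ i) <;> rfl

private lemma morse_eq_mf (k : ℕ) : morse k = mf k := by
  have hk : k < 2 ^ (k + 1) :=
    lt_of_lt_of_le (Nat.lt_two_pow_self) (Nat.pow_le_pow_right (by norm_num) (Nat.le_succ k))
  exact morseBlock_getD (k + 1) k hk

private lemma shift_iterate (r : ℕ) (u : ℕ → Bool) (k : ℕ) : shift^[r] u k = u (k + r) := by
  induction r generalizing u with
  | zero => rfl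
  | succ r ih =>
    rw [Function.iterate_succ_apply, ih]
    simp [shift]
    ring_nf

private lemma sum_pow_lt {e : ℕ → ℕ} (he : StrictMono e) (m : ℕ) :
    (∑ i ∈ Finset.range m, 2 ^ (e i)) < 2 ^ (e m) := by
  induction m with
  | zero => simp [Nat.pow_pos]
  | succ m ih =>
    rw [Finset.sum_range_succ]
    have h1 : e m + 1 ≤ e (m + 1) := he (Nat.lt_succ_self m)
    have h2 : (2:ℕ) ^ (e m + 1) ≤ 2 ^ (e (m + 1)) := Nat.pow_le_pow_right (by norm_num) h1
    have h3 : (2:ℕ) ^ (e m + 1) = 2 ^ (e m) + 2 ^ (e m) := by ring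
    omega

private lemma mf_sum {e : ℕ → ℕ} (he : StrictMono e) (m : ℕ) :
    mf (∑ i ∈ Finset.range m, 2 ^ (e i)) = decide (m % 2 = 1) := by
  induction m with
  | zero => simp [mf_zero]
  | succ m ih =>
    rw [Finset.sum_range_succ]
    have hlt := sum_pow_lt he m
    have harg : (∑ i ∈ Finset.range m, 2 ^ (e i)) + 2 ^ (e m)
        = 1 * 2 ^ (e m) + (∑ i ∈ Finset.range m, 2 ^ (e i)) := by ring
    rw [harg, mf_mul_pow_add 1 _ _ hlt, mf_one, ih]
    rcases Nat.mod_two_eq_zero_or_one m with h | h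
    · have : (m + 1) % 2 = 1 := by omega
      simp [h, this]
    · have : (m + 1) % 2 = 0 := by omega
      simp [h, this]

private lemma mf_compl : ∀ (L x : ℕ), x < 2 ^ L →
    mf ((2 ^ L - 1) - x) = xor (decide (L % 2 = 1)) (mf x) := by
  intro L
  induction L with
  | zero => intro x hx; interval_cases x; simp [mf_zero]
  | succ L ih =>
    intro x hx
    have h2 : (2:ℕ) ^ (L + 1) = 2 * 2 ^ L := by ring
    have hx' : x / 2 < 2 ^ L := by omega
    rcases Nat.mod_two_eq_zero_or_one x with hb | hb
    · have harg : (2 ^ (L+1) - 1) - x = 2 * ((2 ^ L - 1) - x / 2) + 1 := by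
        have hpos : (1:ℕ) ≤ 2 ^ L := Nat.one_le_two_pow
        omega
      have hxe : x = 2 * (x / 2) := by omega
      rw [harg, mf_two_mul_add_one, ih _ hx']
      conv_rhs => rw [hxe, mf_two_mul]
      rcases Nat.mod_two_eq_zero_or_one L with h | h <;>
        · have h' : (L + 1) % 2 = 1 - L % 2 := by omega
          simp [h, h']
    · have harg : (2 ^ (L+1) - 1) - x = 2 * ((2 ^ L - 1) - x / 2) := by
        have hpos : (1:ℕ) ≤ 2 ^ L := Nat.one_le_two_pow
        omega
      have hxe : x = 2 * (x / 2) + 1 := by omega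
      rw [harg, mf_two_mul, ih _ hx']
      conv_rhs => rw [hxe, mf_two_mul_add_one]
      rcases Nat.mod_two_eq_zero_or_one L with h | h <;>
        · have h' : (L + 1) % 2 = 1 - L % 2 := by omega
          simp [h, h']

private lemma mf_three : mf 3 = false := by
  have := mf_two_mul_add_one 1
  simpa [mf_one] using this

private lemma key : ∀ (l : List ℕ) (r : ℕ),
    (∀ j (hj : j < l.length), ∃ q, mf q = false ∧
      r + ((l.take j).map (fun i => 2 ^ i)).sum = q * 2 ^ l[j]) →
    ∀ k < ((l.map morseBlock).flatten).length,
      mf (r + k) = ((l.map morseBlock).flatten).getD k false := by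
  intro l
  induction l with
  | nil => intro r _ k hk; simp at hk
  | cons i l ih =>
    intro r h k hk
    simp only [List.map_cons, List.flatten_cons, List.length_append] at hk ⊢
    by_cases hki : k < 2 ^ i
    · rw [List.getD_append _ _ _ _ (by rw [morseBlock_length]; exact hki)]
      obtain ⟨q, hq, hr⟩ := h 0 (by simp)
      simp only [List.take_zero, List.map_nil, List.sum_nil, add_zero,
        List.getElem_cons_zero] at hr
      rw [hr, mf_mul_pow_add q i k hki, hq, morseBlock_getD i k hki]
      simp
    · push_neg at hki
      have hlen : (morseBlock i).length ≤ k := by rw [morseBlock_length]; exact hki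
      rw [List.getD_append_right _ _ _ _ hlen, morseBlock_length]
      have h' : ∀ j (hj : j < l.length), ∃ q, mf q = false ∧
          (r + 2 ^ i) + ((l.take j).map (fun i => 2 ^ i)).sum = q * 2 ^ l[j] := by
        intro j hj
        obtain ⟨q, hq, hr⟩ := h (j + 1) (by simpa using Nat.succ_lt_succ hj)
        refine ⟨q, hq, ?_⟩
        simp only [List.take_succ_cons, List.map_cons, List.sum_cons,
          List.getElem_cons_succ] at hr
        rw [add_assoc]
        exact hr
      have hk' : k - 2 ^ i < ((l.map morseBlock).flatten).length := by
        rw [morseBlock_length] at hk; omega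
      have := ih (r + 2 ^ i) h' (k - 2 ^ i) hk'
      rw [← this]
      congr 1
      omega

private lemma list_sum_range (g : ℕ → ℕ) (m : ℕ) :
    ((List.range m).map g).sum = ∑ i ∈ Finset.range m, g i := by
  induction m with
  | zero => simp
  | succ m ih =>
    rw [List.range_succ, List.map_append, List.sum_append, Finset.sum_range_succ, ih]
    simp

theorem stmt3 (a : ℕ → ℕ) (hmono : StrictMono a) (hpos : ∀ n, 0 < a n)
    (hpar : ∀ n, a n % 2 = (n + 1) % 2) (n : ℕ) (hn : 2 ≤ n) :
    ∀ k < (((List.range n).map (fun i => morseBlock (a i))).flatten).length,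
      shift^[3 * 2 ^ (a (n - 1)) - ∑ i ∈ Finset.range (n - 1), 2 ^ (a i)] morse k =
        (((List.range n).map (fun i => morseBlock (a i))).flatten).getD k false := by
  intro k hk
  have hmonot : Monotone a := hmono.monotone
  set A := a (n - 1) with hA
  set S := ∑ i ∈ Finset.range (n - 1), 2 ^ (a i) with hSdef
  have hS : S < 2 ^ A := sum_pow_lt hmono (n - 1)
  have hmap : (List.range n).map (fun i => morseBlock (a i))
      = (((List.range n).map a).map morseBlock) := by
    rw [List.map_map]; rfl
  rw [hmap] at hk ⊢
  rw [shift_iterate, morse_eq_mf, Nat.add_comm]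
  refine key ((List.range n).map a) _ ?_ k hk
  intro j hj
  have hjn : j < n := by simpa using hj
  have hgj : ((List.range n).map a)[j]'hj = a j := by
    rw [List.getElem_map, List.getElem_range]
  have htake : ((((List.range n).map a).take j).map (fun i => 2 ^ i)).sum
      = ∑ i ∈ Finset.range j, 2 ^ (a i) := by
    rw [← List.map_take, List.take_range, min_eq_left hjn.le, List.map_map]
    simpa [Function.comp_def] using list_sum_range (fun i => 2 ^ (a i)) j
  rw [hgj, htake]
  -- arithmetic setup
  have hjle : j ≤ n - 1 := by omega
  set m' := n - 1 - j with hm'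
  set e : ℕ → ℕ := fun i => a (j + i) - a j with he
  have hemono : StrictMono e := by
    intro x y hxy
    have h1 := hmono (show j + x < j + y by omega)
    have h2 := hmonot (show j ≤ j + x by omega)
    simp only [he]
    omega
  set T' := ∑ i ∈ Finset.range m', 2 ^ (e i) with hT'
  have heL : e m' = A - a j := by
    simp only [he, hA]
    congr 2
    omega
  set L := A - a j with hL
  have hT'lt : T' < 2 ^ L := by
    have := sum_pow_lt hemono m'
    rwa [heL] at this
  have haj : a j ≤ A := hmonot hjle
  set T := ∑ i ∈ Finset.Ico j (n - 1), 2 ^ (a i) with hT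
  have hsplit : (∑ i ∈ Finset.range j, 2 ^ (a i)) + T = S := by
    rw [hSdef, hT, Finset.range_eq_Ico, Finset.range_eq_Ico]
    exact Finset.sum_Ico_consecutive _ (Nat.zero_le j) hjle
  have hTT' : T = 2 ^ (a j) * T' := by
    rw [hT, Finset.sum_Ico_eq_sum_range, hT', Finset.mul_sum]
    apply Finset.sum_congr (by rw [hm'])
    intro i hi
    rw [← pow_add]
    congr 1
    have := hmonot (show j ≤ j + i by omega)
    simp only [he]
    omega
  refine ⟨3 * 2 ^ L - T', ?_, ?_⟩
  · -- mf value is false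
    by_cases hT'0 : T' = 0
    · rw [show 3 * 2 ^ L - T' = 3 * 2 ^ L + 0 by omega]
      rw [mf_mul_pow_add 3 L 0 (Nat.pow_pos (by norm_num : 0 < 2)), mf_three, mf_zero]
      rfl
    · have hm'pos : m' ≠ 0 := by
        rintro h
        rw [hT', h] at hT'0
        simp at hT'0
      obtain ⟨m'', hm''⟩ : ∃ m'', m' = m'' + 1 := ⟨m' - 1, by omega⟩
      have he0 : e 0 = 0 := by simp [he]
      have hT'pos : 1 ≤ T' := by omega
      have hTsplit : T' = (∑ i ∈ Finset.range m'', 2 ^ (e (i + 1))) + 1 := by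
        rw [hT', hm'', Finset.sum_range_succ', he0]
        norm_num
      have hU : mf (T' - 1) = decide (m'' % 2 = 1) := by
        have hsm : StrictMono (fun i => e (i + 1)) := fun x y hxy => hemono (by omega)
        rw [show T' - 1 = ∑ i ∈ Finset.range m'', 2 ^ (e (i + 1)) by omega]
        exact mf_sum hsm m''
      rw [show 3 * 2 ^ L - T' = 2 * 2 ^ L + (2 ^ L - T') by omega]
      have hxlt : 2 ^ L - T' < 2 ^ L := by omega
      rw [mf_mul_pow_add 2 L _ hxlt]
      have mf2 : mf 2 = true := by
        have := mf_two_mul 1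
        simpa [mf_one] using this
      rw [mf2, show 2 ^ L - T' = (2 ^ L - 1) - (T' - 1) by omega]
      rw [mf_compl L _ (by omega), hU]
      have hp1 : a (n - 1) % 2 = n % 2 := by
        have := hpar (n - 1)
        rwa [show n - 1 + 1 = n by omega] at this
      have hp2 := hpar j
      have hpar' : L % 2 ≠ m'' % 2 := by omega
      rcases Nat.mod_two_eq_zero_or_one L with h1 | h1 <;>
        rcases Nat.mod_two_eq_zero_or_one m'' with h2 | h2 <;>
        simp [h1, h2] at hpar' ⊢
  · -- the equation
    have hmul : (3 * 2 ^ L - T') * 2 ^ (a j) = 3 * 2 ^ A - T := by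
      rw [tsub_mul]
      congr 1
      · rw [mul_assoc, ← pow_add]
        congr 2
        omega
      · rw [hTT', mul_comm]
    rw [hmul]
    omega
end

section
/- There exists a σ-invariant Mycielski set X ⊂ Σ_2 (a countable union of Cantor sets) containing an uncountable set D such that every pair of distinct points of D is extremal distributionally 2-scrambled, and X contains no scrambled triple. -/
open Filter

/-- Diameter of a set with respect to the metric `dist2`. -/
noncomputable def diam2 (X : Set (ℕ → Bool)) : ℝ :=
  sSup {r : ℝ | ∃ u ∈ X, ∃ v ∈ X, r = dist2 u v}


/-- Thue–Morse sequence. -/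
def tm : ℕ → Bool := fun n =>
  if h : n = 0 then false else xor (decide (n % 2 = 1)) (tm (n / 2))
  decreasing_by exact Nat.div_lt_self (Nat.pos_of_ne_zero h) one_lt_two

lemma tm_zero : tm 0 = false := by rw [tm]; simp

lemma tm_two_mul (n : ℕ) : tm (2 * n) = tm n := by
  rcases Nat.eq_zero_or_pos n with h | h
  · simp [h]
  · rw [tm]
    have h2 : 2 * n ≠ 0 := by omega
    simp [h2, Nat.mul_div_cancel_left _ (by norm_num : 0 < 2), Nat.mul_mod_right]

lemma tm_two_mul_add_one (n : ℕ) : tm (2 * n + 1) = !(tm n) := by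
  rw [tm]
  have h2 : 2 * n + 1 ≠ 0 := by omega
  have : (2 * n + 1) / 2 = n := by omega
  have hm : (2 * n + 1) % 2 = 1 := by omega
  simp [h2, this, hm, Bool.xor_comm]

lemma tm_pow_mul_add (n : ℕ) : ∀ q i, i < 2 ^ n → tm (2 ^ n * q + i) = xor (tm q) (tm i) := by
  induction n with
  | zero => intro q i hi; interval_cases i; simp [tm_zero, Nat.mul_comm]
  | succ n ih =>
    intro q i hi
    have hp : (2:ℕ)^(n+1) = 2 * 2^n := by rw [pow_succ]; ring
    rcases Nat.even_or_odd i with ⟨j, hj⟩ | ⟨j, hj⟩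
    · have hj2 : j < 2 ^ n := by omega
      have : 2 ^ (n+1) * q + i = 2 * (2 ^ n * q + j) := by rw [hp, mul_assoc]; omega
      rw [this, tm_two_mul, ih q j hj2, hj]
      have : (2:ℕ) * j = 2 * j := rfl
      rw [show j + j = 2 * j by ring, tm_two_mul]
    · have hj2 : j < 2 ^ n := by omega
      have : 2 ^ (n+1) * q + i = 2 * (2 ^ n * q + j) + 1 := by rw [hp, mul_assoc]; omega
      rw [this, tm_two_mul_add_one, ih q j hj2, hj, show 2 * j + 1 = 2 * j + 1 from rfl, tm_two_mul_add_one]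
      cases tm q <;> cases tm j <;> rfl

lemma tm_one : tm 1 = true := by rw [show (1:ℕ) = 2*0+1 from rfl, tm_two_mul_add_one, tm_zero]; rfl
lemma tm_two : tm 2 = true := by rw [show (2:ℕ) = 2*1 from rfl, tm_two_mul, tm_one]
lemma tm_three : tm 3 = false := by rw [show (3:ℕ) = 2*1+1 from rfl, tm_two_mul_add_one, tm_one]; rfl

/-- Block start positions. -/
def SS : ℕ → ℕ
  | 0 => 0
  | j + 1 => SS j + 2 ^ ((j + 1) * (SS j + 1))

/-- Block exponents. -/
def AA (j : ℕ) : ℕ := (j + 1) * (SS j + 1)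

lemma SS_succ (j : ℕ) : SS (j+1) = SS j + 2 ^ AA j := rfl

lemma AA_ge (j : ℕ) : j + 1 ≤ AA j := Nat.le_mul_of_pos_right _ (by positivity)

lemma SS_lt_succ (j : ℕ) : SS j < SS (j+1) := by
  rw [SS_succ]; have := Nat.pow_pos (n := AA j) (by norm_num : 0 < 2); omega

lemma SS_strictMono : StrictMono SS := strictMono_nat_of_lt_succ SS_lt_succ

lemma SS_ge (j : ℕ) : j ≤ SS j := by
  induction j with
  | zero => simp [SS]
  | succ j ih => have := SS_lt_succ j; omega

lemma le_SS_of_le {n j : ℕ} (h : n ≤ j) : SS n ≤ SS j := SS_strictMono.monotone h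

/-- Exponents at or beyond n are ≥ n. -/
lemma AA_ge_of_ge {n j : ℕ} (h : n ≤ j) : n ≤ AA j := le_trans (by omega) (AA_ge j)

/-- S stabilizes mod 2^n from index n on. -/
lemma SS_mod_stable {n j : ℕ} (h : n ≤ j) : SS j ≡ SS n [MOD 2 ^ n] := by
  induction j with
  | zero => interval_cases n; rfl
  | succ j ih =>
    rcases Nat.lt_or_ge n (j+1) with h' | h'
    · have hj : n ≤ j := by omega
      have : SS (j+1) ≡ SS j [MOD 2 ^ n] := by
        have hd : (2:ℕ)^n ∣ 2 ^ AA j := Nat.pow_dvd_pow 2 (AA_ge_of_ge hj)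
        exact ((Nat.modEq_iff_dvd' (Nat.le_add_right _ _)).2
          (by simpa [SS_succ, AA] using hd)).symm
      exact this.trans (ih hj)
    · have : n = j + 1 := by omega
      subst this; rfl

/-- Index of the block containing k. -/
def JJ (k : ℕ) : ℕ := Nat.findGreatest (fun j => SS j ≤ k) (k + 1)

lemma SS_JJ_le (k : ℕ) : SS (JJ k) ≤ k :=
  Nat.findGreatest_spec (P := fun j => SS j ≤ k) (Nat.zero_le _) (by simp [SS])

lemma lt_SS_JJ_succ (k : ℕ) : k < SS (JJ k + 1) := by
  by_contra h
  push_neg at h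
  have h1 : JJ k + 1 ≤ k + 1 := by have := SS_ge (JJ k + 1); omega
  have := Nat.findGreatest_is_greatest (P := fun j => SS j ≤ k) (n := k + 1)
    (k := JJ k + 1) (Nat.lt_succ_self _) h1
  exact this h

lemma JJ_unique {j k : ℕ} (h1 : SS j ≤ k) (h2 : k < SS (j+1)) : JJ k = j := by
  have a1 := SS_JJ_le k
  have a2 := lt_SS_JJ_succ k
  rcases lt_trichotomy (JJ k) j with h | h | h
  · have : SS (JJ k + 1) ≤ SS j := le_SS_of_le (by omega)
    omega
  · exact h
  · have : SS (j+1) ≤ SS (JJ k) := le_SS_of_le (by omega)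
    omega

lemma JJ_SS (j : ℕ) : JJ (SS j) = j := JJ_unique le_rfl (SS_lt_succ j)

lemma JJ_mono : Monotone JJ := by
  intro a b hab
  by_contra h
  push_neg at h
  have h1 : SS (JJ b + 1) ≤ SS (JJ a) := le_SS_of_le (by omega)
  have := SS_JJ_le a
  have := lt_SS_JJ_succ b
  omega

lemma JJ_tendsto : Filter.Tendsto JJ Filter.atTop Filter.atTop :=
  tendsto_atTop_atTop_of_monotone JJ_mono (fun b => ⟨SS b, le_of_eq (JJ_SS b).symm⟩)

lemma JJ_ge_of_ge {n k : ℕ} (h : SS n ≤ k) : n ≤ JJ k := by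
  by_contra hc
  push_neg at hc
  have : SS (JJ k + 1) ≤ SS n := le_SS_of_le (by omega)
  have := lt_SS_JJ_succ k
  omega

section Dist2

lemma shift_iter (k : ℕ) (u : ℕ → Bool) (i : ℕ) : (shift^[k] u) i = u (i + k) := by
  induction k generalizing u with
  | zero => rfl
  | succ k ih =>
    rw [Function.iterate_succ_apply, ih]
    simp only [shift]
    congr 1

lemma dist2_term_nonneg (u v : ℕ → Bool) (i : ℕ) :
    0 ≤ (if u i = v i then (0:ℝ) else (1/2)^(i+1)) := by
  split
  · exact le_rfl
  · positivity

lemma dist2_term_le (u v : ℕ → Bool) (i : ℕ) :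
    (if u i = v i then (0:ℝ) else (1/2)^(i+1)) ≤ (1/2)^(i+1) := by
  split
  · positivity
  · exact le_rfl

lemma summable_geom_half : Summable (fun i : ℕ => ((1:ℝ)/2)^(i+1)) := by
  have h := summable_geometric_of_lt_one (r := (1:ℝ)/2) (by norm_num) (by norm_num)
  exact (h.mul_left ((1:ℝ)/2)).congr (fun i => by rw [pow_succ]; ring)

lemma dist2_summable (u v : ℕ → Bool) :
    Summable (fun i : ℕ => if u i = v i then (0:ℝ) else (1/2)^(i+1)) :=
  Summable.of_nonneg_of_le (dist2_term_nonneg u v) (dist2_term_le u v) summable_geom_half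

lemma tsum_geom_half : ∑' i : ℕ, ((1:ℝ)/2)^(i+1) = 1 := by
  have h : ∑' i : ℕ, ((1:ℝ)/2)^(i+1) = (1/2) * ∑' i : ℕ, ((1:ℝ)/2)^i := by
    rw [← tsum_mul_left]
    exact tsum_congr fun i => by rw [pow_succ]; ring
  rw [h, tsum_geometric_of_lt_one (by norm_num) (by norm_num)]
  norm_num

lemma summable_geom_half_shift (R : ℕ) : Summable (fun i : ℕ => ((1:ℝ)/2)^(i+R+1)) :=
  (summable_geom_half.mul_left (((1:ℝ)/2)^R)).congr
    (fun i => by rw [← pow_add]; congr 1; omega)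

lemma tsum_geom_half_shift (R : ℕ) : ∑' i : ℕ, ((1:ℝ)/2)^(i+R+1) = (1/2)^R := by
  have h : ∑' i : ℕ, ((1:ℝ)/2)^(i+R+1) = (1/2)^R * ∑' i : ℕ, ((1:ℝ)/2)^(i+1) := by
    rw [← tsum_mul_left]
    exact tsum_congr fun i => by rw [← pow_add]; congr 1; omega
  rw [h, tsum_geom_half, mul_one]

lemma dist2_nonneg (u v : ℕ → Bool) : 0 ≤ dist2 u v :=
  tsum_nonneg (dist2_term_nonneg u v)

lemma dist2_le_one (u v : ℕ → Bool) : dist2 u v ≤ 1 := by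
  rw [dist2]
  exact le_trans
    (Summable.tsum_le_tsum (dist2_term_le u v) (dist2_summable u v) summable_geom_half)
    (le_of_eq tsum_geom_half)

lemma dist2_self (u : ℕ → Bool) : dist2 u u = 0 := by
  rw [dist2]; simp

lemma dist2_le_of_agree {u v : ℕ → Bool} {R : ℕ} (h : ∀ i < R, u i = v i) :
    dist2 u v ≤ (1/2)^R := by
  rw [dist2]
  have hs := dist2_summable u v
  rw [← Summable.sum_add_tsum_nat_add R hs]
  have h1 : ∑ i ∈ Finset.range R, (if u i = v i then (0:ℝ) else (1/2)^(i+1)) = 0 := by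
    apply Finset.sum_eq_zero
    intro i hi
    rw [if_pos (h i (Finset.mem_range.mp hi))]
  rw [h1, zero_add, ← tsum_geom_half_shift R]
  apply Summable.tsum_le_tsum _ (hs.comp_injective (add_left_injective R)) (summable_geom_half_shift R)
  intro i
  simp only [Function.comp]
  split
  · positivity
  · exact le_rfl

lemma dist2_ge_single {u v : ℕ → Bool} {i : ℕ} (h : u i ≠ v i) :
    ((1:ℝ)/2)^(i+1) ≤ dist2 u v := by
  have := Summable.le_tsum (dist2_summable u v) i (fun j _ => dist2_term_nonneg u v j)
  rwa [if_neg h] at this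

lemma geom_sum_half (R : ℕ) : ∑ i ∈ Finset.range R, ((1:ℝ)/2)^(i+1) = 1 - (1/2)^R := by
  induction R with
  | zero => simp
  | succ R ih => rw [Finset.sum_range_succ, ih, pow_succ]; ring

lemma dist2_ge_of_disagree {u v : ℕ → Bool} {R : ℕ} (h : ∀ i < R, u i ≠ v i) :
    1 - (1/2)^R ≤ dist2 u v := by
  rw [dist2]
  have hsum : ∑ i ∈ Finset.range R, (if u i = v i then (0:ℝ) else (1/2)^(i+1))
      = ∑ i ∈ Finset.range R, ((1:ℝ)/2)^(i+1) := by
    apply Finset.sum_congr rfl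
    intro i hi
    rw [if_neg (h i (Finset.mem_range.mp hi))]
  calc 1 - (1/2:ℝ)^R = ∑ i ∈ Finset.range R, (if u i = v i then (0:ℝ) else (1/2)^(i+1)) := by
        rw [hsum, geom_sum_half]
    _ ≤ _ := Summable.sum_le_tsum _ (fun i _ => dist2_term_nonneg u v i) (dist2_summable u v)

end Dist2

section Construction

/-- Sign of block j for parameter α : free (even) blocks encode α, odd blocks are fixed. -/
def sgn (α : ℕ → Bool) (j : ℕ) : Bool :=
  if j % 2 = 0 then α ((Nat.unpair (j / 2)).1) else false

/-- The point of the scrambled family determined by α. -/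
def xx (α : ℕ → Bool) : ℕ → Bool := fun k => xor (tm (k - SS (JJ k))) (sgn α (JJ k))

lemma xx_in_block {α : ℕ → Bool} {j k : ℕ} (h1 : SS j ≤ k) (h2 : k < SS (j+1)) :
    xx α k = xor (tm (k - SS j)) (sgn α j) := by
  rw [xx, JJ_unique h1 h2]

/-- Points agree on a block where their signs agree. -/
lemma xx_agree_on_block {α β : ℕ → Bool} {j k : ℕ} (h1 : SS j ≤ k) (h2 : k < SS (j+1))
    (hs : sgn α j = sgn β j) : xx α k = xx β k := by
  rw [xx_in_block h1 h2, xx_in_block h1 h2, hs]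

/-- Points are complementary on a block where their signs differ. -/
lemma xx_compl_on_block {α β : ℕ → Bool} {j k : ℕ} (h1 : SS j ≤ k) (h2 : k < SS (j+1))
    (hs : sgn α j ≠ sgn β j) : xx α k ≠ xx β k := by
  rw [xx_in_block h1 h2, xx_in_block h1 h2]
  cases hab : sgn α j <;> cases hbb : sgn β j <;>
    simp_all <;> cases tm (k - SS j) <;> simp_all

/-- Self-similarity: on any 2^n-aligned window (beyond SS n), xx is ±(Thue-Morse prefix). -/
lemma xx_selfsim (α : ℕ → Bool) (n k : ℕ) (hk : SS n ≤ k) (hm : k ≡ SS n [MOD 2^n]) :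
    ∃ s, ∀ i < 2^n, xx α (k + i) = xor (tm i) s := by
  set j := JJ k with hj
  have hnj : n ≤ j := JJ_ge_of_ge hk
  have hSjk : SS j ≤ k := SS_JJ_le k
  have hkS : k < SS (j+1) := lt_SS_JJ_succ k
  have hmod : k ≡ SS j [MOD 2^n] := hm.trans (SS_mod_stable hnj).symm
  have hdvd : 2^n ∣ k - SS j := (Nat.modEq_iff_dvd' hSjk).1 hmod.symm
  obtain ⟨q, hq⟩ := hdvd
  have hAA : n ≤ AA j := AA_ge_of_ge (by omega)
  have hblock : SS (j+1) = SS j + 2^n * 2^(AA j - n) := by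
    rw [SS_succ, ← pow_add]
    congr 2
    omega
  have hqlt : q < 2^(AA j - n) := by
    have : 2^n * q < 2^n * 2^(AA j - n) := by omega
    exact lt_of_mul_lt_mul_left this (Nat.zero_le _)
  refine ⟨xor (tm q) (sgn α j), fun i hi => ?_⟩
  have hin1 : SS j ≤ k + i := by omega
  have hin2 : k + i < SS (j+1) := by
    have h1 : 2^n * (q + 1) ≤ 2^n * 2^(AA j - n) := Nat.mul_le_mul_left _ (by omega)
    have : k - SS j + i < 2^n * (q+1) := by rw [Nat.mul_add]; omega
    omega
  rw [xx_in_block hin1 hin2]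
  have : k + i - SS j = 2^n * q + i := by omega
  rw [this, tm_pow_mul_add n q i hi]
  cases tm q <;> cases tm i <;> cases sgn α j <;> rfl

end Construction

section Separation

/-- z behaves like ±(Thue-Morse) on 2^n-windows at positions ≡ c, beyond P. -/
def SSim (n c P : ℕ) (z : ℕ → Bool) : Prop :=
  ∀ k, P ≤ k → k ≡ c [MOD 2^n] → ∃ s, ∀ i < 2^n, z (k + i) = xor (tm i) s

/-- A full tower of self-similar structure with compatible offsets. -/
def Tower (c : ℕ → ℕ) (P : ℕ → ℕ) (z : ℕ → Bool) : Prop :=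
  (∀ n, SSim n (c n) (P n) z) ∧ (∀ n, c (n+1) ≡ c n [MOD 2^n])

lemma tower_mod {c : ℕ → ℕ} (hc : ∀ n, c (n+1) ≡ c n [MOD 2^n]) :
    ∀ {m n}, m ≤ n → c n ≡ c m [MOD 2^m] := by
  intro m n h
  induction n with
  | zero => interval_cases m; exact Nat.modEq_one
  | succ n ih =>
    rcases Nat.lt_or_ge m (n+1) with h' | h'
    · have h1 : c (n+1) ≡ c n [MOD 2^m] :=
        (hc n).of_dvd (Nat.pow_dvd_pow 2 (by omega))
      exact h1.trans (ih (by omega))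
    · have : m = n+1 := by omega
      subst this; rfl

lemma div2_modEq {a b m : ℕ} (h : a ≡ b [MOD 2*m]) : a / 2 ≡ b / 2 [MOD m] := by
  have symmcase : ∀ a b : ℕ, a ≤ b → a ≡ b [MOD 2*m] → a/2 ≡ b/2 [MOD m] := by
    intro a b hab h
    obtain ⟨t, ht⟩ := (Nat.modEq_iff_dvd' hab).1 h
    have hb : b = a + 2 * (m * t) := by rw [mul_assoc] at ht; omega
    rw [hb, Nat.add_mul_div_left _ _ (by norm_num : 0 < 2)]
    unfold Nat.ModEq
    rw [Nat.add_mul_mod_self_left]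
  rcases le_total a b with hab | hab
  · exact symmcase a b hab h
  · exact (symmcase b a hab h.symm).symm

end Separation

section Sep

/-- Base separation: different parity of offsets forces a disagreement in every window of 8. -/
lemma sep_base {c c' P P' : ℕ → ℕ} {u v : ℕ → Bool}
    (hu : Tower c P u) (hv : Tower c' P' v)
    (hne : ¬ c 1 ≡ c' 1 [MOD 2]) :
    ∃ N, ∀ k, N ≤ k → ∃ i, i < 8 ∧ u (k + i) ≠ v (k + i) := by
  refine ⟨max (P 2) (P' 1), fun k hk => ?_⟩
  set K := k + ((c 2 % 4 + 4 - k % 4) % 4) with hKdef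
  have hK : K % 4 = c 2 % 4 ∧ k ≤ K ∧ K < k + 4 := by omega
  have hKmod : K ≡ c 2 [MOD 2^2] := by
    show K % 2^2 = c 2 % 2^2
    exact_mod_cast hK.1
  obtain ⟨s, hs⟩ := hu.1 2 K (le_trans (le_trans (le_max_left _ _) hk) hK.2.1) hKmod
  have hu1 : u (K + 1) = xor (tm 1) s := hs 1 (by norm_num)
  have hu2 : u (K + 2) = xor (tm 2) s := hs 2 (by norm_num)
  -- v side: K+1 is a level-1 block start for v
  have hpar : (K + 1) ≡ c' 1 [MOD 2^1] := by
    have h1 : c 2 ≡ c 1 [MOD 2] := by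
      have := hv.2  -- dummy
      have := (tower_mod hu.2 (by norm_num : 1 ≤ 2))
      simpa using this
    show (K + 1) % 2^1 = c' 1 % 2^1
    have hK1 : K % 4 = c 2 % 4 := hK.1
    have h1' : c 2 % 2 = c 1 % 2 := h1
    have hne' : c 1 % 2 ≠ c' 1 % 2 := hne
    simp only [pow_one]
    omega
  obtain ⟨s', hs'⟩ := hv.1 1 (K + 1)
    (le_trans (le_trans (le_max_right _ _) hk) (by omega)) hpar
  have hv1 : v (K + 1) = xor (tm 0) s' := by simpa using hs' 0 (by norm_num)
  have hv2 : v (K + 2) = xor (tm 1) s' := by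
    have := hs' 1 (by norm_num)
    rwa [show K + 1 + 1 = K + 2 from rfl] at this
  by_contra hcon
  push_neg at hcon
  have e1 : u (K + 1) = v (K + 1) := by
    have := hcon (K + 1 - k) (by omega)
    rwa [show k + (K + 1 - k) = K + 1 by omega] at this
  have e2 : u (K + 2) = v (K + 2) := by
    have := hcon (K + 2 - k) (by omega)
    rwa [show k + (K + 2 - k) = K + 2 by omega] at this
  rw [hu1, hv1] at e1
  rw [hu2, hv2] at e2
  simp only [tm_zero, tm_one, tm_two] at e1 e2
  cases s <;> cases s' <;> simp_all

/-- The derived (level-1) sequence of a tower point. -/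
lemma tower_descend {c P : ℕ → ℕ} {u : ℕ → Bool} (hu : Tower c P u) (r : ℕ) (hr : r = c 1 % 2) :
    Tower (fun n => (c (n+1) % 2^(n+1)) / 2) (fun n => P (n+1)) (fun m => u (2*m + r)) := by
  constructor
  · intro n m hm hmod
    have hm' : P (n+1) ≤ m := hm
    have hmod' : m ≡ (c (n+1) % 2^(n+1)) / 2 [MOD 2^n] := hmod
    obtain ⟨a, ha⟩ : ∃ a, a = c (n+1) % 2^(n+1) := ⟨_, rfl⟩
    rw [← ha] at hmod'
    have hpar : a % 2 = r := by
      have h1 : c (n+1) ≡ c 1 [MOD 2] := by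
        have := tower_mod hu.2 (show 1 ≤ n+1 by omega)
        simpa using this
      have h2 : a ≡ c (n+1) [MOD 2^(n+1)] := by rw [ha]; exact Nat.mod_modEq _ _
      have h3 : a ≡ c (n+1) [MOD 2] := h2.of_dvd ⟨2^n, by rw [pow_succ]; ring⟩
      have h5 : a % 2 = c 1 % 2 := h3.trans h1
      omega
    have hk : (2*m + r) ≡ c (n+1) [MOD 2^(n+1)] := by
      have h1 : 2*m ≡ 2*(a/2) [MOD 2*2^n] := Nat.ModEq.mul_left' 2 hmod'
      have h2 : 2*m + r ≡ 2*(a/2) + r [MOD 2*2^n] := h1.add_right r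
      have h3 : 2*(a/2) + r = a := by omega
      rw [h3] at h2
      have h4 : (2:ℕ)*2^n = 2^(n+1) := by rw [pow_succ]; ring
      rw [h4] at h2
      refine h2.trans ?_
      rw [ha]
      exact Nat.mod_modEq _ _
    obtain ⟨s, hs⟩ := hu.1 (n+1) (2*m + r) (by omega) hk
    refine ⟨s, fun i hi => ?_⟩
    show u (2*(m+i) + r) = xor (tm i) s
    have h2i : 2*i < 2^(n+1) := by rw [pow_succ]; omega
    have := hs (2*i) h2i
    rw [show 2*m + r + 2*i = 2*(m+i) + r by ring] at this
    rw [this, tm_two_mul]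
  · intro n
    apply div2_modEq
    have h4 : (2:ℕ)*2^n = 2^(n+1) := by rw [pow_succ]; ring
    rw [h4]
    calc c (n+2) % 2^(n+2) ≡ c (n+2) [MOD 2^(n+1)] :=
          (Nat.mod_modEq _ _).of_dvd (Nat.pow_dvd_pow 2 (by omega))
      _ ≡ c (n+1) [MOD 2^(n+1)] := hu.2 (n+1)
      _ ≡ c (n+1) % 2^(n+1) [MOD 2^(n+1)] := (Nat.mod_modEq _ _).symm

/-- Main separation lemma: towers with different offsets mod 2^n disagree in every
window of length 4·2^n, eventually. -/
lemma sep : ∀ n {c c' : ℕ → ℕ} {P P' : ℕ → ℕ} {u v : ℕ → Bool},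
    Tower c P u → Tower c' P' v → ¬ c n ≡ c' n [MOD 2^n] →
    ∃ N, ∀ k, N ≤ k → ∃ i, i < 4 * 2^n ∧ u (k + i) ≠ v (k + i) := by
  intro n
  induction n with
  | zero => intro c c' P P' u v _ _ hne; exact absurd Nat.modEq_one hne
  | succ n ih =>
    intro c c' P P' u v hu hv hne
    by_cases hpar : c 1 ≡ c' 1 [MOD 2]
    · -- descend
      match n with
      | 0 => exact absurd (by simpa using hpar) hne
      | Nat.succ n' =>
        set r := c 1 % 2 with hr
        have hr' : r = c' 1 % 2 := hpar
        have hU := tower_descend hu r hr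
        have hV := tower_descend hv r hr'
        set m := n' + 1
        have hdiff : ¬ (c (m+1) % 2^(m+1)) / 2 ≡ (c' (m+1) % 2^(m+1)) / 2 [MOD 2^m] := by
          intro hdd0
          have hdd := hdd0
          apply hne
          obtain ⟨a, hA⟩ : ∃ a, a = c (m+1) % 2^(m+1) := ⟨_, rfl⟩
          obtain ⟨a', hA'⟩ : ∃ a', a' = c' (m+1) % 2^(m+1) := ⟨_, rfl⟩
          rw [← hA, ← hA'] at hdd
          have hpa : a % 2 = r := by
            have h1 : c (m+1) ≡ c 1 [MOD 2] := by simpa using tower_mod hu.2 (show 1 ≤ m+1 by omega)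
            have h3 : a ≡ c (m+1) [MOD 2] := by
              rw [hA]; exact (Nat.mod_modEq _ _).of_dvd ⟨2^m, by rw [pow_succ]; ring⟩
            have h5 : a % 2 = c 1 % 2 := h3.trans h1
            omega
          have hpa' : a' % 2 = r := by
            have h1 : c' (m+1) ≡ c' 1 [MOD 2] := by simpa using tower_mod hv.2 (show 1 ≤ m+1 by omega)
            have h3 : a' ≡ c' (m+1) [MOD 2] := by
              rw [hA']; exact (Nat.mod_modEq _ _).of_dvd ⟨2^m, by rw [pow_succ]; ring⟩
            have h5 : a' % 2 = c' 1 % 2 := h3.trans h1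
            have h6 : c' 1 % 2 = r := hr'.symm
            omega
          have h5 : 2*(a/2) ≡ 2*(a'/2) [MOD 2*2^m] := Nat.ModEq.mul_left' 2 hdd
          have h6 : 2*(a/2) + r ≡ 2*(a'/2) + r [MOD 2*2^m] := h5.add_right r
          have e1 : 2*(a/2) + r = a := by omega
          have e2 : 2*(a'/2) + r = a' := by omega
          have h4 : (2:ℕ)*2^m = 2^(m+1) := by rw [pow_succ]; ring
          rw [e1, e2, h4] at h6
          calc c (m+1) ≡ a [MOD 2^(m+1)] := by rw [hA]; exact (Nat.mod_modEq _ _).symm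
            _ ≡ a' [MOD 2^(m+1)] := h6
            _ ≡ c' (m+1) [MOD 2^(m+1)] := by rw [hA']; exact Nat.mod_modEq _ _
        obtain ⟨N', hN'⟩ := ih hU hV hdiff
        refine ⟨2*N' + 2, fun k hk => ?_⟩
        have hrlt : r < 2 := Nat.mod_lt _ (by norm_num)
        obtain ⟨mm, hm1, hm2, hm3⟩ : ∃ mm, N' ≤ mm ∧ k ≤ 2*mm + r ∧ 2*mm + r ≤ k + 1 := by
          refine ⟨(k + 1 - r)/2, by omega, by omega, by omega⟩
        obtain ⟨i, hi, hne2⟩ := hN' mm hm1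
        refine ⟨2*mm + r + 2*i - k, ?_, ?_⟩
        · have : (4:ℕ) * 2^(m+1) = 8 * 2^m := by rw [pow_succ]; ring
          omega
        · rw [show k + (2*mm + r + 2*i - k) = 2*(mm+i) + r by omega]
          exact hne2
    · -- base case: parities differ
      obtain ⟨N, hN⟩ := sep_base hu hv hpar
      refine ⟨N, fun k hk => ?_⟩
      obtain ⟨i, hi, h⟩ := hN k hk
      refine ⟨i, ?_, h⟩
      have : (8:ℕ) ≤ 4 * 2^(n+1) := by
        have : (2:ℕ) ≤ 2^(n+1) := by
          calc (2:ℕ) = 2^1 := rfl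
            _ ≤ 2^(n+1) := Nat.pow_le_pow_right (by norm_num) (by omega)
        omega
      omega
end Sep

section PairSep

lemma tower_shift_xx (α : ℕ → Bool) (t : ℕ) :
    Tower (fun n => SS n + 2^n * (t+1) - t) SS (shift^[t] (xx α)) := by
  have hle : ∀ n, t ≤ 2^n * (t+1) := by
    intro n
    have h1 : (1:ℕ) ≤ 2^n := Nat.one_le_two_pow
    calc t ≤ t + 1 := by omega
      _ = 1 * (t+1) := by ring
      _ ≤ 2^n * (t+1) := Nat.mul_le_mul_right _ h1
  have hct : ∀ n, (SS n + 2^n * (t+1) - t) + t = SS n + 2^n * (t+1) := fun n => by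
    have := hle n; omega
  constructor
  · intro n k hk hmod
    have h1 : k + t ≡ (SS n + 2^n * (t+1) - t) + t [MOD 2^n] := hmod.add_right t
    rw [hct n] at h1
    have h2 : (SS n + 2^n * (t+1)) ≡ SS n [MOD 2^n] := by
      show (SS n + 2^n * (t+1)) % 2^n = SS n % 2^n
      exact Nat.add_mul_mod_self_left _ _ _
    have h3 : k + t ≡ SS n [MOD 2^n] := h1.trans h2
    obtain ⟨s, hs⟩ := xx_selfsim α n (k + t) (by omega) h3
    refine ⟨s, fun i hi => ?_⟩
    rw [shift_iter]
    rw [show k + i + t = k + t + i by ring]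
    exact hs i hi
  · intro n
    apply Nat.ModEq.add_right_cancel' t
    rw [hct n, hct (n+1)]
    have h2 : (SS n + 2^n * (t+1)) ≡ SS n [MOD 2^n] := by
      show _ % 2^n = SS n % 2^n
      exact Nat.add_mul_mod_self_left _ _ _
    have h2' : (SS (n+1) + 2^(n+1) * (t+1)) ≡ SS (n+1) [MOD 2^(n+1)] := by
      show _ % 2^(n+1) = SS (n+1) % 2^(n+1)
      exact Nat.add_mul_mod_self_left _ _ _
    have h2'' : (SS (n+1) + 2^(n+1) * (t+1)) ≡ SS (n+1) [MOD 2^n] :=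
      h2'.of_dvd (Nat.pow_dvd_pow 2 (by omega))
    calc SS (n+1) + 2^(n+1) * (t+1) ≡ SS (n+1) [MOD 2^n] := h2''
      _ ≡ SS n [MOD 2^n] := SS_mod_stable (by omega)
      _ ≡ SS n + 2^n * (t+1) [MOD 2^n] := h2.symm

lemma pair_sep {α β : ℕ → Bool} {a b : ℕ} (hab : a ≠ b) :
    ∃ ε : ℝ, 0 < ε ∧ ∃ N : ℕ, ∀ k, N ≤ k →
      ε ≤ dist2 (shift^[k] (shift^[a] (xx α))) (shift^[k] (shift^[b] (xx β))) := by
  set n := a + b + 1 with hn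
  have hu := tower_shift_xx α a
  have hv := tower_shift_xx β b
  have hne : ¬ (SS n + 2^n * (a+1) - a) ≡ (SS n + 2^n * (b+1) - b) [MOD 2^n] := by
    intro h
    have hle : ∀ t : ℕ, t ≤ 2^n * (t+1) := by
      intro t
      have h1 : (1:ℕ) ≤ 2^n := Nat.one_le_two_pow
      calc t ≤ t + 1 := by omega
        _ = 1 * (t+1) := by ring
        _ ≤ 2^n * (t+1) := Nat.mul_le_mul_right _ h1
    -- add a + b to both sides
    have h1 := (h.add_right (a + b))
    have e1 : (SS n + 2^n * (a+1) - a) + (a + b) = (SS n + 2^n * (a+1)) + b := by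
      have := hle a; omega
    have e2 : (SS n + 2^n * (b+1) - b) + (a + b) = (SS n + 2^n * (b+1)) + a := by
      have := hle b; omega
    rw [e1, e2] at h1
    have h2 : (SS n + 2^n * (a+1)) + b ≡ SS n + b [MOD 2^n] := by
      show _ % 2^n = _ % 2^n
      rw [show (SS n + 2^n * (a+1)) + b = (SS n + b) + 2^n * (a+1) by ring,
        Nat.add_mul_mod_self_left]
    have h3 : (SS n + 2^n * (b+1)) + a ≡ SS n + a [MOD 2^n] := by
      show _ % 2^n = _ % 2^n
      rw [show (SS n + 2^n * (b+1)) + a = (SS n + a) + 2^n * (b+1) by ring,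
        Nat.add_mul_mod_self_left]
    have h4 : SS n + b ≡ SS n + a [MOD 2^n] := (h2.symm.trans h1).trans h3
    have h5 : b ≡ a [MOD 2^n] := Nat.ModEq.add_left_cancel' (SS n) h4
    rcases Nat.lt_or_ge a b with hab' | hab'
    · have hdvd : 2^n ∣ b - a := (Nat.modEq_iff_dvd' (by omega)).1 h5.symm
      have hpos : 0 < b - a := by omega
      have := Nat.le_of_dvd hpos hdvd
      have hn2 : n < 2^n := Nat.lt_two_pow_self (n := n)
      omega
    · have hab'' : b < a := by omega
      have hdvd : 2^n ∣ a - b := (Nat.modEq_iff_dvd' (by omega)).1 h5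
      have hpos : 0 < a - b := by omega
      have := Nat.le_of_dvd hpos hdvd
      have hn2 : n < 2^n := Nat.lt_two_pow_self (n := n)
      omega
  obtain ⟨N, hN⟩ := sep n hu hv hne
  refine ⟨(1/2)^(4 * 2^n), by positivity, N, fun k hk => ?_⟩
  obtain ⟨i, hi, hne2⟩ := hN k hk
  have hd : (shift^[k] (shift^[a] (xx α))) i ≠ (shift^[k] (shift^[b] (xx β))) i := by
    simp only [shift_iter] at hne2 ⊢
    rwa [show i + k + a = k + i + a by ring, show i + k + b = k + i + b by ring]
  calc ((1:ℝ)/2)^(4 * 2^n) ≤ (1/2)^(i+1) := by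
        apply pow_le_pow_of_le_one (by norm_num) (by norm_num)
        omega
    _ ≤ _ := dist2_ge_single hd

end PairSep

section Triple

lemma sgn_odd (α : ℕ → Bool) {j : ℕ} (h : j % 2 = 1) : sgn α j = false := by
  rw [sgn, if_neg (by omega)]

lemma bool_pigeonhole (a b c : Bool) : a = b ∨ a = c ∨ b = c := by
  cases a <;> cases b <;> cases c <;> simp

lemma dist2_pair_le {α β : ℕ → Bool} {j p : ℕ} (h1 : SS j ≤ p) (h2 : p < SS (j+1))
    (hs : sgn α j = sgn β j) (hs' : sgn α (j+1) = sgn β (j+1)) (t k : ℕ) (hp : p = k + t) :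
    dist2 (shift^[k] (shift^[t] (xx α))) (shift^[k] (shift^[t] (xx β)))
      ≤ (1/2)^(2^(AA (j+1))) := by
  have hR : 2^(AA (j+1)) ≤ SS (j+2) - p := by
    have : SS (j+2) = SS (j+1) + 2^(AA (j+1)) := SS_succ (j+1)
    omega
  calc dist2 (shift^[k] (shift^[t] (xx α))) (shift^[k] (shift^[t] (xx β)))
      ≤ (1/2)^(SS (j+2) - p) := by
        apply dist2_le_of_agree
        intro i hi
        simp only [shift_iter]
        rw [show i + k + t = p + i by omega]
        have hS2 : SS (j+1+1) = SS (j+2) := congrArg SS (by omega)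
        rcases Nat.lt_or_ge (p + i) (SS (j+1)) with h | h
        · exact xx_agree_on_block (by omega) h hs
        · exact xx_agree_on_block h (by omega) hs'
    _ ≤ (1/2)^(2^(AA (j+1))) := by
        apply pow_le_pow_of_le_one (by norm_num) (by norm_num) hR

lemma triple_close (α β γ : ℕ → Bool) (t k : ℕ) :
    min (min (dist2 (shift^[k] (shift^[t] (xx α))) (shift^[k] (shift^[t] (xx β))))
      (dist2 (shift^[k] (shift^[t] (xx α))) (shift^[k] (shift^[t] (xx γ)))))
      (dist2 (shift^[k] (shift^[t] (xx β))) (shift^[k] (shift^[t] (xx γ))))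
    ≤ (1/2)^(2^(AA (JJ (k + t) + 1))) := by
  set p := k + t with hp
  set j := JJ p with hj
  have h1 : SS j ≤ p := SS_JJ_le p
  have h2 : p < SS (j+1) := lt_SS_JJ_succ p
  -- the even (free) index among j, j+1
  have key : ∀ α' β' : ℕ → Bool,
      (sgn α' j = sgn β' j ∧ sgn α' (j+1) = sgn β' (j+1)) ∨ ¬ (j % 2 = 0 → sgn α' j = sgn β' j)
        ∨ ¬ (j % 2 = 1 → sgn α' (j+1) = sgn β' (j+1)) := by
    intro α' β'
    by_cases hj0 : j % 2 = 0
    · by_cases hsj : sgn α' j = sgn β' j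
      · left
        refine ⟨hsj, ?_⟩
        rw [sgn_odd α' (by omega), sgn_odd β' (by omega)]
      · right; left; intro hcon; exact hsj (hcon hj0)
    · by_cases hsj : sgn α' (j+1) = sgn β' (j+1)
      · left
        refine ⟨?_, hsj⟩
        rw [sgn_odd α' (by omega), sgn_odd β' (by omega)]
      · right; right; intro hcon; exact hsj (hcon (by omega))
  -- pigeonhole on the sign at the free index
  have main : (sgn α j = sgn β j ∧ sgn α (j+1) = sgn β (j+1)) ∨
      (sgn α j = sgn γ j ∧ sgn α (j+1) = sgn γ (j+1)) ∨
      (sgn β j = sgn γ j ∧ sgn β (j+1) = sgn γ (j+1)) := by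
    by_cases hj0 : j % 2 = 0
    · have hodd : ∀ δ δ' : ℕ → Bool, sgn δ (j+1) = sgn δ' (j+1) := by
        intro δ δ'
        rw [sgn_odd δ (by omega), sgn_odd δ' (by omega)]
      rcases bool_pigeonhole (sgn α j) (sgn β j) (sgn γ j) with h | h | h
      · exact Or.inl ⟨h, hodd _ _⟩
      · exact Or.inr (Or.inl ⟨h, hodd _ _⟩)
      · exact Or.inr (Or.inr ⟨h, hodd _ _⟩)
    · have hodd : ∀ δ δ' : ℕ → Bool, sgn δ j = sgn δ' j := by
        intro δ δ'
        rw [sgn_odd δ (by omega), sgn_odd δ' (by omega)]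
      rcases bool_pigeonhole (sgn α (j+1)) (sgn β (j+1)) (sgn γ (j+1)) with h | h | h
      · exact Or.inl ⟨hodd _ _, h⟩
      · exact Or.inr (Or.inl ⟨hodd _ _, h⟩)
      · exact Or.inr (Or.inr ⟨hodd _ _, h⟩)
  rcases main with ⟨u1, u2⟩ | ⟨u1, u2⟩ | ⟨u1, u2⟩
  · exact le_trans (le_trans (min_le_left _ _) (min_le_left _ _))
      (dist2_pair_le h1 h2 u1 u2 t k hp)
  · exact le_trans (le_trans (min_le_left _ _) (min_le_right _ _))
      (dist2_pair_le h1 h2 u1 u2 t k hp)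
  · exact le_trans (min_le_right _ _) (dist2_pair_le h1 h2 u1 u2 t k hp)

lemma AA_mono : Monotone AA := by
  intro a b hab
  rw [AA, AA]
  exact Nat.mul_le_mul (by omega) (by have := le_SS_of_le hab; omega)

lemma tendsto_bound (t : ℕ) :
    Filter.Tendsto (fun k : ℕ => ((1:ℝ)/2)^(2^(AA (JJ (k + t) + 1)))) Filter.atTop (nhds 0) := by
  have h1 : Filter.Tendsto (fun k : ℕ => 2^(AA (JJ (k + t) + 1))) Filter.atTop Filter.atTop := by
    apply tendsto_atTop_atTop_of_monotone
    · intro a b hab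
      exact Nat.pow_le_pow_right (by norm_num)
        (AA_mono (by have := JJ_mono (show a + t ≤ b + t by omega); omega))
    · intro b
      refine ⟨SS b, ?_⟩
      have h2 : b ≤ JJ (SS b + t) := JJ_ge_of_ge (by omega)
      have h3 : b ≤ AA (JJ (SS b + t) + 1) := by
        have hA := AA_ge (JJ (SS b + t) + 1)
        omega
      calc b ≤ 2^b := (Nat.lt_two_pow_self (n := b)).le
        _ ≤ 2^(AA (JJ (SS b + t) + 1)) := Nat.pow_le_pow_right (by norm_num) h3
  exact (tendsto_pow_atTop_nhds_zero_of_lt_one (by norm_num) (by norm_num)).comp h1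

end Triple

section NoTriple

def CC (n : ℕ) : Set (ℕ → Bool) := shift^[n] '' Set.range xx

def XXset : Set (ℕ → Bool) := ⋃ n, CC n

lemma mem_XXset {x : ℕ → Bool} (hx : x ∈ XXset) : ∃ t α, x = shift^[t] (xx α) := by
  obtain ⟨_, ⟨t, rfl⟩, hmem⟩ := hx
  obtain ⟨y, ⟨α, rfl⟩, rfl⟩ := hmem
  exact ⟨t, α, rfl⟩

lemma min3_nonneg (a b c : ℝ) (ha : 0 ≤ a) (hb : 0 ≤ b) (hc : 0 ≤ c) :
    0 ≤ min (min a b) c := le_min (le_min ha hb) hc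

lemma no_scr_triple : ∀ x ∈ XXset, ∀ y ∈ XXset, ∀ z ∈ XXset, ¬ ScrTriple x y z := by
  intro x hx y hy z hz hscr
  obtain ⟨t1, α, rfl⟩ := mem_XXset hx
  obtain ⟨t2, β, rfl⟩ := mem_XXset hy
  obtain ⟨t3, γ, rfl⟩ := mem_XXset hz
  obtain ⟨hne1, hne2, hne3, hlim, hlimsup⟩ := hscr
  -- helper for the misaligned case
  have paircase : ∀ ε : ℝ, 0 < ε → ∀ N : ℕ,
      (∀ k, N ≤ k → ε ≤ max (max
          (dist2 (shift^[k] (shift^[t1] (xx α))) (shift^[k] (shift^[t2] (xx β))))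
          (dist2 (shift^[k] (shift^[t1] (xx α))) (shift^[k] (shift^[t3] (xx γ)))))
          (dist2 (shift^[k] (shift^[t2] (xx β))) (shift^[k] (shift^[t3] (xx γ))))) → False := by
    intro ε hε N hN
    have hbd : Filter.IsBoundedUnder (· ≤ ·) Filter.atTop (fun k : ℕ => max (max
        (dist2 (shift^[k] (shift^[t1] (xx α))) (shift^[k] (shift^[t2] (xx β))))
        (dist2 (shift^[k] (shift^[t1] (xx α))) (shift^[k] (shift^[t3] (xx γ)))))
        (dist2 (shift^[k] (shift^[t2] (xx β))) (shift^[k] (shift^[t3] (xx γ))))) := by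
      exact Filter.isBoundedUnder_of ⟨1, fun k =>
        max_le (max_le (dist2_le_one _ _) (dist2_le_one _ _)) (dist2_le_one _ _)⟩
    have hliminf : ε ≤ Filter.liminf (fun k : ℕ => max (max
        (dist2 (shift^[k] (shift^[t1] (xx α))) (shift^[k] (shift^[t2] (xx β))))
        (dist2 (shift^[k] (shift^[t1] (xx α))) (shift^[k] (shift^[t3] (xx γ)))))
        (dist2 (shift^[k] (shift^[t2] (xx β))) (shift^[k] (shift^[t3] (xx γ))))) Filter.atTop := by
      apply Filter.le_liminf_of_le hbd.isCoboundedUnder_ge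
      exact Filter.eventually_atTop.2 ⟨N, hN⟩
    rw [hlim] at hliminf
    linarith
  by_cases e12 : t1 = t2
  · by_cases e13 : t1 = t3
    · -- aligned: limsup of mins is 0
      subst e12; subst e13
      have htend : Filter.Tendsto (fun k : ℕ => min (min
          (dist2 (shift^[k] (shift^[t1] (xx α))) (shift^[k] (shift^[t1] (xx β))))
          (dist2 (shift^[k] (shift^[t1] (xx α))) (shift^[k] (shift^[t1] (xx γ)))))
          (dist2 (shift^[k] (shift^[t1] (xx β))) (shift^[k] (shift^[t1] (xx γ)))))
          Filter.atTop (nhds 0) := by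
        apply squeeze_zero
        · intro k
          exact min3_nonneg _ _ _ (dist2_nonneg _ _) (dist2_nonneg _ _) (dist2_nonneg _ _)
        · intro k
          exact triple_close α β γ t1 k
        · exact tendsto_bound t1
      rw [htend.limsup_eq] at hlimsup
      exact lt_irrefl 0 hlimsup
    · -- pair (x, z) misaligned
      obtain ⟨ε, hε, N, hN⟩ := pair_sep (α := α) (β := γ) e13
      refine paircase ε hε N fun k hk => ?_
      exact le_trans (hN k hk) (le_trans (le_max_right _ _) (le_max_left _ _))
  · -- pair (x, y) misaligned
    obtain ⟨ε, hε, N, hN⟩ := pair_sep (α := α) (β := β) e12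
    refine paircase ε hε N fun k hk => ?_
    exact le_trans (hN k hk) (le_trans (le_max_left _ _) (le_max_left _ _))

end NoTriple

section Pairs

lemma card_Ioo_le (m : ℕ) (p : ℕ → Prop) [DecidablePred p] :
    ((Finset.Ioo 0 m).filter p).card ≤ m := by
  refine le_trans (Finset.card_filter_le _ _) ?_
  rw [Nat.card_Ioo]
  omega

lemma phiStar_one {α α' : ℕ → Bool}
    (hag : ∀ s : ℕ, ∃ j, s ≤ j ∧ sgn α j = sgn α' j) (ε : ℝ) (hε : 0 < ε) :
    PhiStar (xx α) (xx α') ε = 1 := by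
  classical
  rw [PhiStar]
  set f := fun m : ℕ => (((Finset.Ioo 0 m).filter
      (fun k => dist2 (shift^[k] (xx α)) (shift^[k] (xx α')) < ε)).card : ℝ) / m with hfdef
  have hf0 : ∀ m, 0 ≤ f m := fun m => by positivity
  have hf1 : ∀ m, f m ≤ 1 := by
    intro m
    rcases Nat.eq_zero_or_pos m with rfl | hm
    · simp [hfdef]
    · rw [hfdef]
      apply div_le_one_of_le₀
      · exact_mod_cast Nat.cast_le.2 (card_Ioo_le m _)
      · positivity
  have hbdd : Filter.IsBoundedUnder (· ≤ ·) Filter.atTop f := Filter.isBoundedUnder_of ⟨1, hf1⟩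
  have hbdd' : Filter.IsBoundedUnder (· ≥ ·) Filter.atTop f := Filter.isBoundedUnder_of ⟨0, hf0⟩
  apply le_antisymm
  · exact Filter.limsup_le_of_le hbdd'.isCoboundedUnder_le (Filter.Eventually.of_forall hf1)
  · apply le_of_forall_pos_le_add
    intro η hη
    have key : ∃ᶠ m in Filter.atTop, 1 - η ≤ f m := by
      rw [Filter.frequently_atTop]
      intro M
      obtain ⟨R, hR⟩ := exists_pow_lt_of_lt_one hε (by norm_num : (1:ℝ)/2 < 1)
      obtain ⟨Q, hQ⟩ := exists_nat_ge ((R + 1 : ℝ)/η)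
      obtain ⟨j, hjs, hsgn⟩ := hag (max (max M Q) 1)
      have hj1 : 1 ≤ j := le_trans (le_max_right _ _) hjs
      have hjQ : Q ≤ j := le_trans (le_trans (le_max_right _ _) (le_max_left _ _)) hjs
      have hjM : M ≤ j := le_trans (le_trans (le_max_left _ _) (le_max_left _ _)) hjs
      set m := SS (j+1) with hmdef
      have hm0 : 0 < m := by have := SS_ge (j+1); omega
      have hSjm : SS j + 2^(AA j) = m := (SS_succ j).symm
      have hQm : Q * (SS j + 1) ≤ m := by
        have h1 : Q * (SS j + 1) ≤ (j+1) * (SS j + 1) := Nat.mul_le_mul_right _ (by omega)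
        have h2 : (j+1) * (SS j + 1) = AA j := rfl
        have h3 : AA j ≤ 2^(AA j) := (Nat.lt_two_pow_self).le
        omega
      refine ⟨m, by have := SS_ge (j+1); omega, ?_⟩
      rcases le_or_gt 1 η with hη1 | hη1
      · calc (1:ℝ) - η ≤ 0 := by linarith
          _ ≤ f m := hf0 m
      -- main estimate
      have hkey : (R + SS j : ℝ) ≤ η * m := by
        have c1 : (R + 1 : ℝ) ≤ η * Q := by
          rw [div_le_iff₀ hη] at hQ
          linarith [hQ]
        have c2 : (Q * (SS j + 1) : ℝ) ≤ m := by exact_mod_cast hQm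
        have c3 : (0:ℝ) ≤ SS j + 1 := by positivity
        nlinarith [hQ, c1, c2]
      have hRSm : R + SS j < m := by
        have : η * m < m := by
          have : (0:ℝ) < m := by exact_mod_cast hm0
          nlinarith
        have : (R + SS j : ℝ) < m := lt_of_le_of_lt hkey this
        exact_mod_cast this
      -- counting
      have hsub : Finset.Ico (SS j) (m - R) ⊆ (Finset.Ioo 0 m).filter
          (fun k => dist2 (shift^[k] (xx α)) (shift^[k] (xx α')) < ε) := by
        intro k hk
        rw [Finset.mem_Ico] at hk
        have hk0 : 0 < k := by have := SS_ge j; omega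
        rw [Finset.mem_filter, Finset.mem_Ioo]
        refine ⟨⟨hk0, by omega⟩, ?_⟩
        have hagree : ∀ i < R, (shift^[k] (xx α)) i = (shift^[k] (xx α')) i := by
          intro i hi
          rw [shift_iter, shift_iter]
          exact xx_agree_on_block (by omega) (by omega) hsgn
        calc dist2 (shift^[k] (xx α)) (shift^[k] (xx α')) ≤ (1/2)^R := dist2_le_of_agree hagree
          _ < ε := hR
      have hcard : m - R - SS j ≤ ((Finset.Ioo 0 m).filter
          (fun k => dist2 (shift^[k] (xx α)) (shift^[k] (xx α')) < ε)).card := by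
        have := Finset.card_le_card hsub
        rwa [Nat.card_Ico] at this
      -- ratio estimate
      rw [hfdef]
      have hm0' : (0:ℝ) < m := by exact_mod_cast hm0
      have hcast : ((m - R - SS j : ℕ) : ℝ) = (m:ℝ) - (R + SS j) := by
        have e : m - R - SS j = m - (R + SS j) := by omega
        rw [e, Nat.cast_sub (le_of_lt hRSm)]
        push_cast
        ring
      have h5 : ((R + SS j : ℝ))/m ≤ η := (div_le_iff₀ hm0').2 hkey
      have h7 : ((m - R - SS j : ℕ):ℝ) ≤ (((Finset.Ioo 0 m).filter
          (fun k => dist2 (shift^[k] (xx α)) (shift^[k] (xx α')) < ε)).card : ℝ) :=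
        Nat.cast_le.2 hcard
      rw [hcast] at h7
      have h8 : ((m:ℝ) - (R + SS j))/m ≤ (((Finset.Ioo 0 m).filter
          (fun k => dist2 (shift^[k] (xx α)) (shift^[k] (xx α')) < ε)).card : ℝ) / m :=
        (div_le_div_iff_of_pos_right hm0').2 h7
      have h9 : ((m:ℝ) - (R + SS j))/m = 1 - ((R + SS j:ℝ))/m := by
        field_simp
      calc (1:ℝ) - η ≤ 1 - ((R + SS j:ℝ))/m := by linarith
        _ = ((m:ℝ) - (R + SS j))/m := h9.symm
        _ ≤ _ := h8
    calc (1:ℝ) ≤ (1 - η) + η := by ring_nf; exact le_refl 1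
      _ ≤ _ + η := by
        have := Filter.le_limsup_of_frequently_le key hbdd
        linarith [this]

end Pairs

lemma phi_zero {α α' : ℕ → Bool}
    (hdis : ∀ s : ℕ, ∃ j, s ≤ j ∧ sgn α j ≠ sgn α' j) (δ : ℝ) (hδ0 : 0 < δ) (hδ1 : δ < 1) :
    Phi (xx α) (xx α') δ = 0 := by
  classical
  rw [Phi]
  set f := fun m : ℕ => (((Finset.Ioo 0 m).filter
      (fun k => dist2 (shift^[k] (xx α)) (shift^[k] (xx α')) < δ)).card : ℝ) / m with hfdef
  have hf0 : ∀ m, 0 ≤ f m := fun m => by positivity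
  have hf1 : ∀ m, f m ≤ 1 := by
    intro m
    rcases Nat.eq_zero_or_pos m with rfl | hm
    · simp [hfdef]
    · rw [hfdef]
      apply div_le_one_of_le₀
      · exact_mod_cast Nat.cast_le.2 (card_Ioo_le m _)
      · positivity
  have hbdd : Filter.IsBoundedUnder (· ≤ ·) Filter.atTop f := Filter.isBoundedUnder_of ⟨1, hf1⟩
  have hbdd' : Filter.IsBoundedUnder (· ≥ ·) Filter.atTop f := Filter.isBoundedUnder_of ⟨0, hf0⟩
  apply le_antisymm
  · apply le_of_forall_pos_le_add
    intro η hη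
    have key : ∃ᶠ m in Filter.atTop, f m ≤ η := by
      rw [Filter.frequently_atTop]
      intro M
      obtain ⟨R, hR⟩ := exists_pow_lt_of_lt_one (by linarith : (0:ℝ) < 1 - δ)
        (by norm_num : (1:ℝ)/2 < 1)
      obtain ⟨Q, hQ⟩ := exists_nat_ge ((R + 1 : ℝ)/η)
      obtain ⟨j, hjs, hsgn⟩ := hdis (max (max M Q) 1)
      have hj1 : 1 ≤ j := le_trans (le_max_right _ _) hjs
      have hjQ : Q ≤ j := le_trans (le_trans (le_max_right _ _) (le_max_left _ _)) hjs
      have hjM : M ≤ j := le_trans (le_trans (le_max_left _ _) (le_max_left _ _)) hjs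
      set m := SS (j+1) with hmdef
      have hm0 : 0 < m := by have := SS_ge (j+1); omega
      have hSjm : SS j + 2^(AA j) = m := (SS_succ j).symm
      have hQm : Q * (SS j + 1) ≤ m := by
        have h1 : Q * (SS j + 1) ≤ (j+1) * (SS j + 1) := Nat.mul_le_mul_right _ (by omega)
        have h2 : (j+1) * (SS j + 1) = AA j := rfl
        have h3 : AA j ≤ 2^(AA j) := (Nat.lt_two_pow_self).le
        omega
      refine ⟨m, by have := SS_ge (j+1); omega, ?_⟩
      have hkey : (R + SS j : ℝ) ≤ η * m := by
        have c1 : (R + 1 : ℝ) ≤ η * Q := by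
          rw [div_le_iff₀ hη] at hQ
          linarith [hQ]
        have c2 : (Q * (SS j + 1) : ℕ) ≤ m := hQm
        have c2' : (Q * (SS j + 1) : ℝ) ≤ m := by exact_mod_cast c2
        nlinarith [hQ, c1, c2']
      -- counting: the filtered set avoids Ico (SS j) (m - R)
      have havoid : ∀ k ∈ Finset.Ico (SS j) (m - R),
          ¬ dist2 (shift^[k] (xx α)) (shift^[k] (xx α')) < δ := by
        intro k hk
        rw [Finset.mem_Ico] at hk
        push_neg
        have hdisag : ∀ i < R, (shift^[k] (xx α)) i ≠ (shift^[k] (xx α')) i := by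
          intro i hi
          rw [shift_iter, shift_iter]
          exact xx_compl_on_block (by omega) (by omega) hsgn
        calc δ ≤ 1 - (1/2)^R := by linarith
          _ ≤ dist2 (shift^[k] (xx α)) (shift^[k] (xx α')) := dist2_ge_of_disagree hdisag
      have hsub : (Finset.Ioo 0 m).filter
          (fun k => dist2 (shift^[k] (xx α)) (shift^[k] (xx α')) < δ)
          ⊆ Finset.Ioo 0 m \ Finset.Ico (SS j) (m - R) := by
        intro k hk
        rw [Finset.mem_filter] at hk
        rw [Finset.mem_sdiff]
        refine ⟨hk.1, fun hmem => havoid k hmem hk.2⟩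
      have hIcosub : Finset.Ico (SS j) (m - R) ⊆ Finset.Ioo 0 m := by
        intro k hk
        rw [Finset.mem_Ico] at hk
        rw [Finset.mem_Ioo]
        have := SS_ge j
        omega
      have hcard : ((Finset.Ioo 0 m).filter
          (fun k => dist2 (shift^[k] (xx α)) (shift^[k] (xx α')) < δ)).card ≤ R + SS j := by
        refine le_trans (Finset.card_le_card hsub) ?_
        rw [Finset.card_sdiff_of_subset hIcosub, Nat.card_Ioo, Nat.card_Ico]
        omega
      rw [hfdef]
      have hm0' : (0:ℝ) < m := by exact_mod_cast hm0
      have h7 : (((Finset.Ioo 0 m).filter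
          (fun k => dist2 (shift^[k] (xx α)) (shift^[k] (xx α')) < δ)).card : ℝ)
          ≤ (R + SS j : ℝ) := by exact_mod_cast Nat.cast_le.2 hcard
      calc (((Finset.Ioo 0 m).filter
          (fun k => dist2 (shift^[k] (xx α)) (shift^[k] (xx α')) < δ)).card : ℝ) / m
          ≤ (R + SS j : ℝ)/m := (div_le_div_iff_of_pos_right hm0').2 h7
        _ ≤ η := (div_le_iff₀ hm0').2 hkey
    have := Filter.liminf_le_of_frequently_le key hbdd'
    linarith
  · exact Filter.le_liminf_of_le hbdd.isCoboundedUnder_ge (Filter.Eventually.of_forall hf0)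

section Cantor

lemma cont_xx : Continuous (fun α : ℕ → Bool => xx α) := by
  apply continuous_pi
  intro k
  show Continuous fun α : ℕ → Bool => xor (tm (k - SS (JJ k))) (sgn α (JJ k))
  by_cases h : (JJ k) % 2 = 0
  · simp only [sgn, if_pos h]
    exact Continuous.comp (g := fun b => xor (tm (k - SS (JJ k))) b)
      continuous_of_discreteTopology (continuous_apply ((Nat.unpair (JJ k / 2)).1))
  · simp only [sgn, if_neg h]
    exact continuous_const

lemma cont_shift : Continuous shift := continuous_pi (fun n => continuous_apply (n+1))

lemma compact_CC (n : ℕ) : IsCompact (CC n) :=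
  (isCompact_range cont_xx).image (cont_shift.iterate n)

lemma cylinder_subset {x : ℕ → Bool} {U : Set (ℕ → Bool)} (hU : U ∈ nhds x) :
    ∃ m, ∀ z : ℕ → Bool, (∀ i < m, z i = x i) → z ∈ U := by
  rw [nhds_pi, Filter.mem_pi] at hU
  obtain ⟨I, hIfin, V, hV, hsub⟩ := hU
  obtain ⟨m, hm⟩ : ∃ m, ∀ i ∈ I, i < m := by
    rcases Set.Finite.bddAbove hIfin with ⟨b, hb⟩
    exact ⟨b+1, fun i hi => by have := hb hi; omega⟩
  refine ⟨m, fun z hz => hsub ?_⟩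
  intro i hi
  rw [hz i (hm i hi)]
  exact mem_of_mem_nhds (hV i)

lemma sgn_update {α : ℕ → Bool} {n₀ j : ℕ} (b : Bool) (hj : j < n₀) :
    sgn (Function.update α n₀ b) j = sgn α j := by
  rw [sgn, sgn]
  split
  · rw [Function.update_of_ne]
    have h1 := Nat.unpair_left_le (j/2)
    omega
  · rfl

lemma xx_update_agree {α : ℕ → Bool} {n₀ : ℕ} (b : Bool) {q : ℕ} (hq : q < n₀) :
    xx (Function.update α n₀ b) q = xx α q := by
  rw [xx, xx, sgn_update]
  have h1 : JJ q ≤ SS (JJ q) := SS_ge (JJ q)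
  have h2 := SS_JJ_le q
  omega

lemma sgn_at_pair (α : ℕ → Bool) (a s : ℕ) :
    sgn α (2 * Nat.pair a s) = α a := by
  rw [sgn, if_pos (by omega)]
  rw [Nat.mul_div_cancel_left _ (by norm_num : 0 < 2), Nat.unpair_pair]

lemma perfect_CC (n : ℕ) : Perfect (CC n) := by
  constructor
  · exact (compact_CC n).isClosed
  · intro x hx
    obtain ⟨w, ⟨α, rfl⟩, rfl⟩ := hx
    rw [accPt_iff_nhds]
    intro U hU
    obtain ⟨m, hm⟩ := cylinder_subset hU
    set n₀ := n + m + 1 with hn₀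
    set α' := Function.update α n₀ (!(α n₀)) with hα'
    refine ⟨shift^[n] (xx α'), ⟨hm _ ?_, ⟨xx α', ⟨α', rfl⟩, rfl⟩⟩, ?_⟩
    · intro i hi
      rw [shift_iter, shift_iter]
      exact xx_update_agree _ (by omega)
    · set k₀ := SS (2 * Nat.pair n₀ 0) with hk₀
      have hk₀n : n ≤ k₀ := by
        have h1 : n₀ ≤ Nat.pair n₀ 0 := Nat.left_le_pair n₀ 0
        have h2 : 2 * Nat.pair n₀ 0 ≤ SS (2 * Nat.pair n₀ 0) := SS_ge _
        omega
      have hsgn : sgn α' (2 * Nat.pair n₀ 0) ≠ sgn α (2 * Nat.pair n₀ 0) := by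
        rw [sgn_at_pair, sgn_at_pair, hα', Function.update_self]
        cases α n₀ <;> simp
      have hdiff : xx α' k₀ ≠ xx α k₀ :=
        xx_compl_on_block le_rfl (SS_lt_succ _) hsgn
      intro heq
      apply hdiff
      have := congrFun heq (k₀ - n)
      rw [shift_iter, shift_iter] at this
      rwa [show k₀ - n + n = k₀ by omega] at this

lemma isCantor_CC (n : ℕ) : IsCantorSet (CC n) :=
  ⟨⟨shift^[n] (xx (fun _ => false)), ⟨xx (fun _ => false), ⟨_, rfl⟩, rfl⟩⟩,
    compact_CC n, perfect_CC n,
    isTotallyDisconnected_of_totallyDisconnectedSpace _⟩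

end Cantor

section Final

def psi (β : ℕ → Bool) : ℕ → Bool := fun n => if n % 2 = 0 then β (n/2) else false

lemma psi_odd (β : ℕ → Bool) : psi β 1 = false := by rw [psi]; norm_num

lemma psi_even (β : ℕ → Bool) (k : ℕ) : psi β (2*k) = β k := by
  rw [psi, if_pos (by omega), Nat.mul_div_cancel_left _ (by norm_num : 0 < 2)]

lemma hag_psi (β β' : ℕ → Bool) :
    ∀ s : ℕ, ∃ j, s ≤ j ∧ sgn (psi β) j = sgn (psi β') j := by
  intro s
  refine ⟨2 * Nat.pair 1 s, ?_, ?_⟩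
  · have := Nat.right_le_pair 1 s
    omega
  · rw [sgn_at_pair, sgn_at_pair, psi_odd, psi_odd]

lemma hdis_psi {β β' : ℕ → Bool} {n : ℕ} (hn : β n ≠ β' n) :
    ∀ s : ℕ, ∃ j, s ≤ j ∧ sgn (psi β) j ≠ sgn (psi β') j := by
  intro s
  refine ⟨2 * Nat.pair (2*n) s, ?_, ?_⟩
  · have := Nat.right_le_pair (2*n) s
    omega
  · rw [sgn_at_pair, sgn_at_pair, psi_even, psi_even]
    exact hn

lemma xxpsi_injective : Function.Injective (fun β : ℕ → Bool => xx (psi β)) := by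
  intro β β' h
  by_contra hne
  obtain ⟨n, hn⟩ : ∃ n, β n ≠ β' n := by
    by_contra hc
    push_neg at hc
    exact hne (funext hc)
  obtain ⟨j, _, hsgn⟩ := hdis_psi hn 0
  have := xx_compl_on_block (le_refl (SS j)) (SS_lt_succ j) hsgn
  exact this (congrFun h (SS j))

lemma not_countable_seq : ¬ Countable (ℕ → Bool) := by
  intro h
  obtain ⟨g, hg⟩ := exists_surjective_nat (ℕ → Bool)
  obtain ⟨m, hm⟩ := hg (fun n => !(g n n))
  have := congrFun hm m
  simp at this

lemma D_not_countable : ¬ (Set.range (fun β : ℕ → Bool => xx (psi β))).Countable := by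
  intro h
  have h2 : Countable (Set.range (fun β : ℕ → Bool => xx (psi β))) := h.to_subtype
  have h3 : Function.Injective (fun β : ℕ → Bool =>
      (⟨xx (psi β), Set.mem_range_self β⟩ : Set.range (fun β : ℕ → Bool => xx (psi β)))) := by
    intro a b hab
    exact xxpsi_injective (congrArg Subtype.val hab)
  exact not_countable_seq (Function.Injective.countable h3)

lemma diam2_XX_le_one : diam2 XXset ≤ 1 := by
  apply Real.sSup_le
  · rintro r ⟨u, _, v, _, rfl⟩
    exact dist2_le_one u v
  · norm_num

lemma XX_shift_invariant : ∀ x ∈ XXset, shift x ∈ XXset := by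
  intro x hx
  obtain ⟨t, α, rfl⟩ := mem_XXset hx
  have : shift (shift^[t] (xx α)) = shift^[t+1] (xx α) := (Function.iterate_succ_apply' _ _ _).symm
  rw [this]
  exact Set.mem_iUnion.2 ⟨t+1, ⟨xx α, ⟨α, rfl⟩, rfl⟩⟩

end Final


theorem stmt18 : ∃ X : Set (ℕ → Bool),
    (∃ C : ℕ → Set (ℕ → Bool), (∀ n, IsCantorSet (C n)) ∧ X = ⋃ n, C n) ∧
    (∀ x ∈ X, shift x ∈ X) ∧
    ∃ D : Set (ℕ → Bool), D ⊆ X ∧ ¬ D.Countable ∧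
    (∀ x ∈ D, ∀ y ∈ D, x ≠ y →
      (∀ ε > 0, PhiStar x y ε = 1) ∧ (∀ δ : ℝ, 0 < δ → δ < diam2 X → Phi x y δ = 0)) ∧
    ∀ x ∈ X, ∀ y ∈ X, ∀ z ∈ X, ¬ ScrTriple x y z := by
  refine ⟨XXset, ⟨CC, isCantor_CC, rfl⟩, XX_shift_invariant,
    Set.range (fun β : ℕ → Bool => xx (psi β)), ?_, D_not_countable, ?_, no_scr_triple⟩
  · rintro _ ⟨β, rfl⟩
    exact Set.mem_iUnion.2 ⟨0, ⟨xx (psi β), ⟨psi β, rfl⟩, rfl⟩⟩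
  · rintro _ ⟨β, rfl⟩ _ ⟨β', rfl⟩ hxy
    obtain ⟨n, hn⟩ : ∃ n, β n ≠ β' n := by
      by_contra hc
      push_neg at hc
      exact hxy (congrArg (fun b => xx (psi b)) (funext hc))
    refine ⟨fun ε hε => phiStar_one (hag_psi β β') ε hε,
      fun δ hδ0 hδd => phi_zero (hdis_psi hn) δ hδ0 (lt_of_lt_of_le hδd diam2_XX_le_one)⟩
end
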